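/- Suppose m ≥ 4. Then every element x ∈ X is contained in exactly r_4 = (2^m − 4)(2^m − 8)/3! blocks of W_4, and the total number of blocks is |W_4| = (2^m − 2)(2^m − 4)(2^m − 8)/4!. -/

import Mathlib

open scoped Classical

noncomputable section

/-- `X = GF(2^m) \\ {0, 1}`. -/
def designX (m : ℕ) : Set (GaloisField 2 m) := {x | x ≠ 0 ∧ x ≠ 1}

/-- `W_k`: the collection of all `k`-element subsets `B` of `X` whose element-sum is `1`
and such that no nonempty proper subset of `B` has element-sum `1`. -/
def designW (m k : ℕ) : Set (Finset (GaloisField 2 m)) :=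
  {B | (B : Set (GaloisField 2 m)) ⊆ designX m ∧ B.card = k ∧ B.sum id = 1 ∧
    ∀ I ⊆ B, I.Nonempty → I ≠ B → I.sum id ≠ 1}

namespace W4Aux

open Finset

variable {m : ℕ}

noncomputable instance : Fintype (GaloisField 2 m) := Fintype.ofFinite _

local notation "F" => GaloisField 2 m

lemma htwo : (2 : F) = 0 := CharTwo.two_eq_zero

lemma eqc {a b : F} : a = b ↔ a + b = 0 := by
  rw [← sub_eq_zero, CharTwo.sub_eq_add]

/-- The four "forbidden" values for the second element of a block containing `x`. -/
def A4 (x : F) : Finset F := {0, 1, x, 1 + x}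

/-- The eight "forbidden" values for the third element. -/
def A8 (x b : F) : Finset F := {0, 1, x, 1 + x, b, 1 + b, x + b, 1 + x + b}

def S1 (x : F) : Finset F := univ \ A4 x

def S2 (x b : F) : Finset F := univ \ A8 x b

def P (x : F) : Finset (F × F) := (S1 x).biUnion (fun b => (S2 x b).image (Prod.mk b))

def hmap (x : F) (p : F × F) : Finset F := {x, p.1, p.2, 1 + x + p.1 + p.2}

lemma mem_S1 {x b : F} : b ∈ S1 x ↔ b ≠ 0 ∧ b ≠ 1 ∧ b ≠ x ∧ b ≠ 1 + x := by
  simp [S1, A4]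

lemma mem_S2 {x b c : F} : c ∈ S2 x b ↔ c ≠ 0 ∧ c ≠ 1 ∧ c ≠ x ∧ c ≠ 1 + x ∧ c ≠ b ∧
    c ≠ 1 + b ∧ c ≠ x + b ∧ c ≠ 1 + x + b := by
  simp [S2, A8]

lemma mem_P {x : F} {p : F × F} : p ∈ P x ↔ p.1 ∈ S1 x ∧ p.2 ∈ S2 x p.1 := by
  obtain ⟨b, c⟩ := p
  simp only [P, mem_biUnion, mem_image, Prod.mk.injEq]
  constructor
  · rintro ⟨b', hb', c', hc', rfl, rfl⟩; exact ⟨hb', hc'⟩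
  · rintro ⟨hb, hc⟩; exact ⟨b, hb, c, hc, rfl, rfl⟩

lemma card_A4 {x : F} (hx0 : x ≠ 0) (hx1 : x ≠ 1) : (A4 x).card = 4 := by
  have p01 : (0 : F) ≠ 1 := zero_ne_one
  have p0x : (0 : F) ≠ x := Ne.symm hx0
  have p0x1 : (0 : F) ≠ 1 + x := fun h => hx1 (by linear_combination -h - htwo)
  have p1x : (1 : F) ≠ x := Ne.symm hx1
  have p1x1 : (1 : F) ≠ 1 + x := fun h => hx0 (by linear_combination -h)
  have pxx1 : x ≠ 1 + x := fun h => (one_ne_zero : (1 : F) ≠ 0) (by linear_combination -h)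
  have n0 : (0 : F) ∉ ({1, x, 1 + x} : Finset F) := by
    simp only [mem_insert, mem_singleton]; push_neg; exact ⟨p01, p0x, p0x1⟩
  have n1 : (1 : F) ∉ ({x, 1 + x} : Finset F) := by
    simp only [mem_insert, mem_singleton]; push_neg; exact ⟨p1x, p1x1⟩
  have n2 : x ∉ ({1 + x} : Finset F) := by simp only [mem_singleton]; exact pxx1
  rw [A4, card_insert_of_notMem n0, card_insert_of_notMem n1,
    card_insert_of_notMem n2, card_singleton]

lemma card_A8 {x b : F} (hx0 : x ≠ 0) (hx1 : x ≠ 1) (hb : b ∈ S1 x) :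
    (A8 x b).card = 8 := by
  obtain ⟨hb0, hb1, hbx, hbx1⟩ := mem_S1.mp hb
  have p01 : (0 : F) ≠ 1 := zero_ne_one
  have p0x : (0 : F) ≠ x := Ne.symm hx0
  have p0x1 : (0 : F) ≠ 1 + x := fun h => hx1 (by linear_combination -h - htwo)
  have p0b : (0 : F) ≠ b := Ne.symm hb0
  have p0b1 : (0 : F) ≠ 1 + b := fun h => hb1 (by linear_combination -h - htwo)
  have p0xb : (0 : F) ≠ x + b := fun h => hbx (by linear_combination -h - x * htwo)
  have p0xb1 : (0 : F) ≠ 1 + x + b := fun h => hbx1 (by linear_combination -h - htwo - x * htwo)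
  have p1x : (1 : F) ≠ x := Ne.symm hx1
  have p1x1 : (1 : F) ≠ 1 + x := fun h => hx0 (by linear_combination -h)
  have p1b : (1 : F) ≠ b := Ne.symm hb1
  have p1b1 : (1 : F) ≠ 1 + b := fun h => hb0 (by linear_combination -h)
  have p1xb : (1 : F) ≠ x + b := fun h => hbx1 (by linear_combination -h - x * htwo)
  have p1xb1 : (1 : F) ≠ 1 + x + b := fun h => hbx (by linear_combination -h - x * htwo)
  have pxx1 : x ≠ 1 + x := fun h => (one_ne_zero : (1 : F) ≠ 0) (by linear_combination -h)
  have pxb : x ≠ b := Ne.symm hbx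
  have pxb1 : x ≠ 1 + b := fun h => hbx1 (by linear_combination -h - htwo)
  have pxxb : x ≠ x + b := fun h => hb0 (by linear_combination -h)
  have pxxb1 : x ≠ 1 + x + b := fun h => hb1 (by linear_combination -h - htwo)
  have px1b : 1 + x ≠ b := Ne.symm hbx1
  have px1b1 : 1 + x ≠ 1 + b := fun h => hbx (by linear_combination -h)
  have px1xb : 1 + x ≠ x + b := fun h => hb1 (by linear_combination -h)
  have px1xb1 : 1 + x ≠ 1 + x + b := fun h => hb0 (by linear_combination -h)
  have pbb1 : b ≠ 1 + b := fun h => (one_ne_zero : (1 : F) ≠ 0) (by linear_combination -h)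
  have pbxb : b ≠ x + b := fun h => hx0 (by linear_combination -h)
  have pbxb1 : b ≠ 1 + x + b := fun h => hx1 (by linear_combination -h - htwo)
  have pb1xb : 1 + b ≠ x + b := fun h => hx1 (by linear_combination -h)
  have pb1xb1 : 1 + b ≠ 1 + x + b := fun h => hx0 (by linear_combination -h)
  have pxbxb1 : x + b ≠ 1 + x + b := fun h => (one_ne_zero : (1 : F) ≠ 0) (by linear_combination -h)
  have n0 : (0 : F) ∉ ({1, x, 1 + x, b, 1 + b, x + b, 1 + x + b} : Finset F) := by
    simp only [mem_insert, mem_singleton]; push_neg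
    exact ⟨p01, p0x, p0x1, p0b, p0b1, p0xb, p0xb1⟩
  have n1 : (1 : F) ∉ ({x, 1 + x, b, 1 + b, x + b, 1 + x + b} : Finset F) := by
    simp only [mem_insert, mem_singleton]; push_neg
    exact ⟨p1x, p1x1, p1b, p1b1, p1xb, p1xb1⟩
  have n2 : x ∉ ({1 + x, b, 1 + b, x + b, 1 + x + b} : Finset F) := by
    simp only [mem_insert, mem_singleton]; push_neg
    exact ⟨pxx1, pxb, pxb1, pxxb, pxxb1⟩
  have n3 : 1 + x ∉ ({b, 1 + b, x + b, 1 + x + b} : Finset F) := by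
    simp only [mem_insert, mem_singleton]; push_neg
    exact ⟨px1b, px1b1, px1xb, px1xb1⟩
  have n4 : b ∉ ({1 + b, x + b, 1 + x + b} : Finset F) := by
    simp only [mem_insert, mem_singleton]; push_neg
    exact ⟨pbb1, pbxb, pbxb1⟩
  have n5 : 1 + b ∉ ({x + b, 1 + x + b} : Finset F) := by
    simp only [mem_insert, mem_singleton]; push_neg
    exact ⟨pb1xb, pb1xb1⟩
  have n6 : x + b ∉ ({1 + x + b} : Finset F) := by simp only [mem_singleton]; exact pxbxb1
  rw [A8, card_insert_of_notMem n0, card_insert_of_notMem n1, card_insert_of_notMem n2,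
    card_insert_of_notMem n3, card_insert_of_notMem n4, card_insert_of_notMem n5,
    card_insert_of_notMem n6, card_singleton]

lemma card_S1 {x : F} (hm : m ≠ 0) (hx0 : x ≠ 0) (hx1 : x ≠ 1) :
    (S1 x).card = 2 ^ m - 4 := by
  rw [S1, card_sdiff_of_subset (subset_univ _), card_univ, card_A4 hx0 hx1,
    ← Nat.card_eq_fintype_card, GaloisField.card 2 m hm]

lemma card_S2 {x b : F} (hm : m ≠ 0) (hx0 : x ≠ 0) (hx1 : x ≠ 1) (hb : b ∈ S1 x) :
    (S2 x b).card = 2 ^ m - 8 := by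
  rw [S2, card_sdiff_of_subset (subset_univ _), card_univ, card_A8 hx0 hx1 hb,
    ← Nat.card_eq_fintype_card, GaloisField.card 2 m hm]

lemma card_P {x : F} (hm : m ≠ 0) (hx0 : x ≠ 0) (hx1 : x ≠ 1) :
    (P x).card = (2 ^ m - 4) * (2 ^ m - 8) := by
  rw [P, card_biUnion]
  · rw [Finset.sum_congr rfl (fun b hb => by
      rw [card_image_of_injective _ (fun c c' h => (Prod.mk.injEq _ _ _ _).mp h |>.2),
        card_S2 hm hx0 hx1 hb])]
    rw [Finset.sum_const, card_S1 hm hx0 hx1, smul_eq_mul]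
  · intro b hb b' hb' hne
    simp only [disjoint_left, mem_image]
    rintro p ⟨c, hc, rfl⟩ ⟨c', hc', h⟩
    exact hne ((Prod.mk.injEq _ _ _ _).mp h).1.symm

/-- Membership in `W₄` reduces to the three "positive" conditions. -/
lemma mem_W4_iff {B : Finset F} :
    B ∈ designW m 4 ↔ (↑B ⊆ designX m ∧ B.card = 4 ∧ B.sum id = 1) := by
  constructor
  · rintro ⟨h1, h2, h3, -⟩; exact ⟨h1, h2, h3⟩
  · rintro ⟨h1, h2, h3⟩
    refine ⟨h1, h2, h3, fun I hI hne hnB hsum => ?_⟩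
    have hss : I ⊂ B := Finset.ssubset_iff_subset_ne.mpr ⟨hI, hnB⟩
    have hclt : I.card < 4 := h2 ▸ card_lt_card hss
    have hsd : (B \ I).sum id + I.sum id = B.sum id := Finset.sum_sdiff hI
    rw [hsum, h3] at hsd
    have hJ0 : (B \ I).sum id = 0 := by linear_combination hsd
    have hJcard : (B \ I).card = 4 - I.card := by rw [card_sdiff_of_subset hI, h2]
    have hc1 : 1 ≤ I.card := hne.card_pos
    have hcases : I.card = 1 ∨ I.card = 2 ∨ I.card = 3 := by omega
    rcases hcases with h | h | h
    · obtain ⟨a, ha⟩ := card_eq_one.mp h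
      rw [ha, sum_singleton] at hsum
      have haB : a ∈ B := hI (ha ▸ mem_singleton_self a)
      exact (h1 (mem_coe.mpr haB)).2 hsum
    · have : (B \ I).card = 2 := by omega
      obtain ⟨a, b, hab, hJ⟩ := card_eq_two.mp this
      rw [hJ, sum_pair hab] at hJ0
      exact hab (eqc.mpr hJ0)
    · have : (B \ I).card = 1 := by omega
      obtain ⟨a, hJ⟩ := card_eq_one.mp this
      rw [hJ, sum_singleton] at hJ0
      have haB : a ∈ B := (mem_sdiff.mp (hJ ▸ mem_singleton_self a)).1
      exact (h1 (mem_coe.mpr haB)).1 hJ0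



lemma card_quad {x b c d : F} (hxb : x ≠ b) (hxc : x ≠ c) (hxd : x ≠ d)
    (hbc : b ≠ c) (hbd : b ≠ d) (hcd : c ≠ d) : ({x, b, c, d} : Finset F).card = 4 := by
  have n0 : x ∉ ({b, c, d} : Finset F) := by
    simp only [mem_insert, mem_singleton]; push_neg; exact ⟨hxb, hxc, hxd⟩
  have n1 : b ∉ ({c, d} : Finset F) := by
    simp only [mem_insert, mem_singleton]; push_neg; exact ⟨hbc, hbd⟩
  have n2 : c ∉ ({d} : Finset F) := by simp only [mem_singleton]; exact hcd
  rw [card_insert_of_notMem n0, card_insert_of_notMem n1, card_insert_of_notMem n2,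
    card_singleton]

lemma sum_quad {x b c d : F} (hxb : x ≠ b) (hxc : x ≠ c) (hxd : x ≠ d)
    (hbc : b ≠ c) (hbd : b ≠ d) (hcd : c ≠ d) :
    ({x, b, c, d} : Finset F).sum id = x + (b + (c + d)) := by
  have n0 : x ∉ ({b, c, d} : Finset F) := by
    simp only [mem_insert, mem_singleton]; push_neg; exact ⟨hxb, hxc, hxd⟩
  have n1 : b ∉ ({c, d} : Finset F) := by
    simp only [mem_insert, mem_singleton]; push_neg; exact ⟨hbc, hbd⟩
  have n2 : c ∉ ({d} : Finset F) := by simp only [mem_singleton]; exact hcd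
  rw [sum_insert n0, sum_insert n1, sum_insert n2, sum_singleton]; rfl

lemma hmap_mem {x : F} (hx : x ∈ designX m) {p : F × F} (hp : p ∈ P x) :
    hmap x p ∈ designW m 4 ∧ x ∈ hmap x p := by
  obtain ⟨b, c⟩ := p
  obtain ⟨hb, hc⟩ := mem_P.mp hp
  obtain ⟨hb0, hb1, hbx, hbx1⟩ := mem_S1.mp hb
  obtain ⟨hc0, hc1, hcx, hcx1, hcb, hcb1, hcxb, hcxb1⟩ := mem_S2.mp hc
  obtain ⟨hx0, hx1⟩ := hx
  have dxb : x ≠ b := Ne.symm hbx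
  have dxc : x ≠ c := Ne.symm hcx
  have dbc : b ≠ c := Ne.symm hcb
  have dxd : x ≠ 1 + x + b + c := fun h => hcb1 (by linear_combination -h - htwo - b * htwo)
  have dbd : b ≠ 1 + x + b + c := fun h => hcx1 (by linear_combination -h - htwo - x * htwo)
  have dcd : c ≠ 1 + x + b + c := fun h => hbx1 (by linear_combination -h - htwo - x * htwo)
  have d0 : (1 : F) + x + b + c ≠ 0 := fun h =>
    hcxb1 (by linear_combination h - htwo - x * htwo - b * htwo)
  have d1 : (1 : F) + x + b + c ≠ 1 := fun h =>
    hcxb (by linear_combination h - x * htwo - b * htwo)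
  have hxmem : x ∈ hmap x (b, c) := mem_insert_self _ _
  refine ⟨mem_W4_iff.mpr ⟨?_, ?_, ?_⟩, hxmem⟩
  · intro a ha
    simp only [hmap, coe_insert, Set.mem_insert_iff, coe_singleton, Set.mem_singleton_iff] at ha
    rcases ha with rfl | rfl | rfl | rfl
    · exact ⟨hx0, hx1⟩
    · exact ⟨hb0, hb1⟩
    · exact ⟨hc0, hc1⟩
    · exact ⟨d0, d1⟩
  · exact card_quad dxb dxc dxd dbc dbd dcd
  · rw [show hmap x (b, c) = ({x, b, c, 1 + x + b + c} : Finset F) from rfl,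
      sum_quad dxb dxc dxd dbc dbd dcd]
    linear_combination (x + b + c) * htwo

lemma pair_ne_of_card {a b : F} {B : Finset F} (h4 : B.card = 4) :
    ({a, b} : Finset F) ≠ B := by
  intro h
  have h2 : ({a, b} : Finset F).card ≤ 2 :=
    (card_insert_le _ _).trans (by simp)
  rw [h, h4] at h2; omega

lemma triple_ne_of_card {a b c : F} {B : Finset F} (h4 : B.card = 4) :
    ({a, b, c} : Finset F) ≠ B := by
  intro h
  have h2 : ({a, b, c} : Finset F).card ≤ 3 :=
    (card_insert_le _ _).trans (by have := card_insert_le b ({c} : Finset F); simp only [card_singleton] at this; omega)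
  rw [h, h4] at h2; omega

lemma fiber_eq {x : F} {B : Finset F} (hx : x ∈ designX m) (hB : B ∈ designW m 4)
    (hxB : x ∈ B) :
    (P x).filter (fun p => hmap x p = B) = (B.erase x).offDiag := by
  obtain ⟨hBX, hB4, hBsum, hBmin⟩ := hB
  obtain ⟨hx0, hx1⟩ := hx
  ext ⟨b, c⟩
  simp only [mem_filter, mem_P, mem_offDiag]
  constructor
  · rintro ⟨⟨hb, hc⟩, hhB⟩
    obtain ⟨hb0, hb1, hbx, hbx1⟩ := mem_S1.mp hb
    obtain ⟨hc0, hc1, hcx, hcx1, hcb, hcb1, hcxb, hcxb1⟩ := mem_S2.mp hc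
    have hbB : b ∈ B := by
      rw [← hhB]; exact mem_insert_of_mem (mem_insert_self _ _)
    have hcB : c ∈ B := by
      rw [← hhB]; exact mem_insert_of_mem (mem_insert_of_mem (mem_insert_self _ _))
    exact ⟨mem_erase.mpr ⟨hbx, hbB⟩, mem_erase.mpr ⟨hcx, hcB⟩, Ne.symm hcb⟩
  · rintro ⟨hbE, hcE, hbc⟩
    have hbB : b ∈ B := mem_of_mem_erase hbE
    have hcB : c ∈ B := mem_of_mem_erase hcE
    have hbx : b ≠ x := ne_of_mem_erase hbE
    have hcx : c ≠ x := ne_of_mem_erase hcE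
    have hcE2 : c ∈ (B.erase x).erase b := mem_erase.mpr ⟨hbc.symm, hcE⟩
    have hcard1 : (((B.erase x).erase b).erase c).card = 1 := by
      rw [card_erase_of_mem hcE2, card_erase_of_mem hbE, card_erase_of_mem hxB, hB4]
    obtain ⟨d, hd⟩ := card_eq_one.mp hcard1
    have hdmem : d ∈ ((B.erase x).erase b).erase c := hd ▸ mem_singleton_self d
    have hdc : d ≠ c := (mem_erase.mp hdmem).1
    have hdb : d ≠ b := (mem_erase.mp (mem_of_mem_erase hdmem)).1
    have hdx : d ≠ x := (mem_erase.mp (mem_of_mem_erase (mem_of_mem_erase hdmem))).1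
    have hdB : d ∈ B := mem_of_mem_erase (mem_of_mem_erase (mem_of_mem_erase hdmem))
    have hxb : x ≠ b := Ne.symm hbx
    have hxc : x ≠ c := Ne.symm hcx
    have hxd : x ≠ d := Ne.symm hdx
    have hbd : b ≠ d := Ne.symm hdb
    have hcd : c ≠ d := Ne.symm hdc
    have hsub : ({x, b, c, d} : Finset F) ⊆ B := by
      intro a ha
      simp only [mem_insert, mem_singleton] at ha
      rcases ha with rfl | rfl | rfl | rfl <;> assumption
    have hBeq : B = ({x, b, c, d} : Finset F) :=
      (eq_of_subset_of_card_le hsub (by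
        rw [hB4, card_quad hxb hxc hxd hbc hbd hcd])).symm
    have hsum4 : x + (b + (c + d)) = 1 := by
      have h := hBsum
      rw [hBeq, sum_quad hxb hxc hxd hbc hbd hcd] at h
      exact h
    have hdval : d = 1 + x + b + c := by
      linear_combination hsum4 - x * htwo - b * htwo - c * htwo
    have hb0 : b ≠ 0 := (hBX (mem_coe.mpr hbB)).1
    have hb1 : b ≠ 1 := (hBX (mem_coe.mpr hbB)).2
    have hc0 : c ≠ 0 := (hBX (mem_coe.mpr hcB)).1
    have hc1 : c ≠ 1 := (hBX (mem_coe.mpr hcB)).2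
    have hd1 : d ≠ 1 := (hBX (mem_coe.mpr hdB)).2
    have pairx : ∀ a : F, a ∈ B → a = 1 + x → False := by
      intro a haB haeq
      have haxne : x ≠ a := fun h => (one_ne_zero : (1 : F) ≠ 0) (by linear_combination haeq - h + (1 - a + x) * htwo)
      refine hBmin {x, a} ?_ (insert_nonempty _ _) (pair_ne_of_card hB4) ?_
      · intro e he
        simp only [mem_insert, mem_singleton] at he
        rcases he with rfl | rfl <;> assumption
      · rw [sum_pair haxne]
        show x + a = 1
        linear_combination haeq + x * htwo
    have hbx1 : b ≠ 1 + x := fun h => pairx b hbB h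
    have hcx1 : c ≠ 1 + x := fun h => pairx c hcB h
    have hcb1 : c ≠ 1 + b := by
      intro h
      refine hBmin {b, c} ?_ (insert_nonempty _ _) (pair_ne_of_card hB4) ?_
      · intro e he
        simp only [mem_insert, mem_singleton] at he
        rcases he with rfl | rfl <;> assumption
      · rw [sum_pair hbc]
        show b + c = 1
        linear_combination h + b * htwo
    have hcxb : c ≠ x + b := by
      intro h
      apply hd1
      linear_combination hdval + h + (x + b) * htwo
    have hcxb1 : c ≠ 1 + x + b := by
      intro h
      refine hBmin {x, b, c} ?_ (insert_nonempty _ _) (triple_ne_of_card hB4) ?_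
      · intro e he
        simp only [mem_insert, mem_singleton] at he
        rcases he with rfl | rfl | rfl <;> assumption
      · have n0 : x ∉ ({b, c} : Finset F) := by
          simp only [mem_insert, mem_singleton]; push_neg; exact ⟨hxb, hxc⟩
        rw [sum_insert n0, sum_pair hbc]
        show x + (b + c) = 1
        linear_combination h + (x + b) * htwo
    refine ⟨⟨mem_S1.mpr ⟨hb0, hb1, hbx, hbx1⟩,
      mem_S2.mpr ⟨hc0, hc1, hcx, hcx1, hbc.symm, hcb1, hcxb, hcxb1⟩⟩, ?_⟩
    show ({x, b, c, 1 + x + b + c} : Finset F) = B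
    rw [hBeq, ← hdval]

lemma image_eq {x : F} (hx : x ∈ designX m) :
    (P x).image (hmap x) = univ.filter (fun B : Finset F => B ∈ designW m 4 ∧ x ∈ B) := by
  ext B
  simp only [mem_image, mem_filter, mem_univ, true_and]
  constructor
  · rintro ⟨p, hp, rfl⟩; exact hmap_mem hx hp
  · rintro ⟨hB, hxB⟩
    have hfib := fiber_eq hx hB hxB
    have hcard3 : (B.erase x).card = 3 := by
      rw [card_erase_of_mem hxB, (mem_W4_iff.mp hB).2.1]
    have hne : (B.erase x).offDiag.Nonempty := by
      rw [← card_pos, offDiag_card, hcard3]; norm_num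
    obtain ⟨p, hp⟩ := hne
    rw [← hfib] at hp
    exact ⟨p, (mem_filter.mp hp).1, (mem_filter.mp hp).2⟩

lemma key_count {x : F} (hm : m ≠ 0) (hx : x ∈ designX m) :
    (univ.filter (fun B : Finset F => B ∈ designW m 4 ∧ x ∈ B)).card * 6 =
      (2 ^ m - 4) * (2 ^ m - 8) := by
  have h1 := Finset.card_eq_sum_card_image (hmap x) (P x)
  rw [image_eq hx] at h1
  have h2 : ∀ B ∈ univ.filter (fun B : Finset F => B ∈ designW m 4 ∧ x ∈ B),
      ((P x).filter (fun p => hmap x p = B)).card = 6 := by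
    intro B hBf
    have hB : B ∈ designW m 4 := (mem_filter.mp hBf).2.1
    have hxB : x ∈ B := (mem_filter.mp hBf).2.2
    rw [fiber_eq hx hB hxB, offDiag_card, card_erase_of_mem hxB, (mem_W4_iff.mp hB).2.1]
  rw [Finset.sum_congr rfl h2, sum_const, smul_eq_mul] at h1
  rw [← h1, card_P hm hx.1 hx.2]

end W4Aux

/-- For `m ≥ 4`, every `x ∈ X` lies in exactly `r_4` blocks of `W_4`, and the total
number of blocks is `|W_4| = b_4`. -/
theorem repetition_and_block_numbers_W4 (m : ℕ) (hm : 4 ≤ m) :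
    (∀ x ∈ designX m, {B ∈ designW m 4 | x ∈ B}.ncard = (2 ^ m - 4) * (2 ^ m - 8) / Nat.factorial 3) ∧
    (designW m 4).ncard = (2 ^ m - 2) * (2 ^ m - 4) * (2 ^ m - 8) / Nat.factorial 4 := by
  have hm0 : m ≠ 0 := by omega
  have part1 : ∀ x ∈ designX m,
      {B ∈ designW m 4 | x ∈ B}.ncard = (2 ^ m - 4) * (2 ^ m - 8) / Nat.factorial 3 := by
    intro x hx
    have hset : {B ∈ designW m 4 | x ∈ B} =
        ↑(Finset.univ.filter (fun B : Finset (GaloisField 2 m) => B ∈ designW m 4 ∧ x ∈ B)) := by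
      ext B
      simp only [Set.mem_setOf_eq, Finset.coe_filter, Finset.mem_univ, true_and]
    rw [hset, Set.ncard_coe_finset]
    rw [show Nat.factorial 3 = 6 from rfl, ← W4Aux.key_count hm0 hx,
      Nat.mul_div_cancel _ (by norm_num)]
  refine ⟨part1, ?_⟩
  set W := Finset.univ.filter (fun B : Finset (GaloisField 2 m) => B ∈ designW m 4) with hW
  have hset2 : designW m 4 = ↑W := by
    ext B; simp only [hW, Finset.coe_filter, Finset.mem_univ, true_and, Set.mem_setOf_eq]
  rw [hset2, Set.ncard_coe_finset]
  set Xf := (Finset.univ : Finset (GaloisField 2 m)) \ {0, 1} with hXf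
  have hXfmem : ∀ a : GaloisField 2 m, a ∈ Xf ↔ a ≠ 0 ∧ a ≠ 1 := by
    intro a
    simp [hXf, Finset.mem_sdiff, not_or]
  have hXfcard : Xf.card = 2 ^ m - 2 := by
    rw [hXf, Finset.card_sdiff_of_subset (Finset.subset_univ _), Finset.card_univ,
      ← Nat.card_eq_fintype_card, GaloisField.card 2 m hm0, Finset.card_pair zero_ne_one]
  have hfour : ∀ B ∈ W, (Xf.filter (fun a => a ∈ B)).card = 4 := by
    intro B hB
    have hBW : B ∈ designW m 4 := (Finset.mem_filter.mp hB).2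
    obtain ⟨hBX, hB4, -, -⟩ := hBW
    have hfe : Xf.filter (fun a => a ∈ B) = B := by
      ext a
      simp only [Finset.mem_filter]
      refine ⟨fun h => h.2, fun h => ⟨(hXfmem a).mpr ?_, h⟩⟩
      exact ⟨(hBX (Finset.mem_coe.mpr h)).1, (hBX (Finset.mem_coe.mpr h)).2⟩
    rw [hfe, hB4]
  have dc : ∑ a ∈ Xf, (W.filter (fun B => a ∈ B)).card = 4 * W.card := by
    calc ∑ a ∈ Xf, (W.filter (fun B => a ∈ B)).card
        = ∑ a ∈ Xf, ∑ B ∈ W, (if a ∈ B then 1 else 0) := by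
          exact Finset.sum_congr rfl fun a _ => Finset.card_filter _ _
      _ = ∑ B ∈ W, ∑ a ∈ Xf, (if a ∈ B then 1 else 0) := Finset.sum_comm
      _ = ∑ B ∈ W, (Xf.filter (fun a => a ∈ B)).card := by
          exact Finset.sum_congr rfl fun B _ => (Finset.card_filter _ _).symm
      _ = ∑ B ∈ W, 4 := Finset.sum_congr rfl hfour
      _ = 4 * W.card := by rw [Finset.sum_const, smul_eq_mul, mul_comm]
  have dc2 : ∀ a ∈ Xf, (W.filter (fun B => a ∈ B)).card * 6 = (2 ^ m - 4) * (2 ^ m - 8) := by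
    intro a ha
    have hax : a ∈ designX m := (hXfmem a).mp ha
    have hk := W4Aux.key_count hm0 hax
    rw [hW, Finset.filter_filter]
    exact hk
  have h6 : (∑ a ∈ Xf, (W.filter (fun B => a ∈ B)).card) * 6 =
      (2 ^ m - 2) * ((2 ^ m - 4) * (2 ^ m - 8)) := by
    rw [Finset.sum_mul, Finset.sum_congr rfl dc2, Finset.sum_const, smul_eq_mul, hXfcard]
  rw [dc] at h6
  have h24 : W.card * 24 = (2 ^ m - 2) * (2 ^ m - 4) * (2 ^ m - 8) := by
    calc W.card * 24 = 4 * W.card * 6 := by ring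
      _ = (2 ^ m - 2) * ((2 ^ m - 4) * (2 ^ m - 8)) := h6
      _ = (2 ^ m - 2) * (2 ^ m - 4) * (2 ^ m - 8) := by ring
  rw [show Nat.factorial 4 = 24 from rfl, ← h24, Nat.mul_div_cancel _ (by norm_num)]
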